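/- Assume the triangle is not equilateral (so D := a⁴ + b⁴ + c⁴ − a²b² − b²c² − c²a² > 0). Let Ω₁ and Ω₂ be first and second Brocard points with Ω₁ ≠ O and Ω₂ ≠ O. Then the exterior Brocard points are given in barycentric form by: inversion O R Ω₁ = (a²(a²−b²) • A + b²(b²−c²) • B + c²(c²−a²) • C)/D and inversion O R Ω₂ = (a²(a²−c²) • A + b²(b²−a²) • B + c²(c²−b²) • C)/D (affine combinations of A, B, C with the indicated weights). -/

import Mathlib

open EuclideanGeometry
open scoped EuclideanGeometry RealInnerProductSpace

noncomputable section

private lemma inner_comb {E : Type*} [NormedAddCommGroup E] [InnerProductSpace ℝ E]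
    (u v : E) (s t s' t' : ℝ) :
    ⟪s • u + t • v, s' • u + t' • v⟫ =
      s * s' * ⟪u, u⟫ + (s * t' + t * s') * ⟪u, v⟫ + t * t' * ⟪v, v⟫ := by
  simp only [inner_add_left, inner_add_right, real_inner_smul_left, real_inner_smul_right,
    real_inner_comm v u]
  ring

private lemma gram_helper {E : Type*} [NormedAddCommGroup E] [InnerProductSpace ℝ E]
    (u v : E) (s t s' t' : ℝ) :
    ⟪s • u + t • v, s • u + t • v⟫ * ⟪s' • u + t' • v, s' • u + t' • v⟫ -
      ⟪s • u + t • v, s' • u + t' • v⟫ * ⟪s • u + t • v, s' • u + t' • v⟫ =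
      (s * t' - t * s') ^ 2 * (⟪u, u⟫ * ⟪v, v⟫ - ⟪u, v⟫ ^ 2) := by
  rw [inner_comb, inner_comb, inner_comb]
  ring

private lemma angle_aux {E : Type*} [NormedAddCommGroup E] [InnerProductSpace ℝ E]
    (x₁ y₁ x₂ y₂ : E) (k₁ k₂ : ℝ) (hk₁ : 0 < k₁) (hk₂ : 0 < k₂)
    (hg₁ : ⟪x₁, x₁⟫ * ⟪y₁, y₁⟫ - ⟪x₁, y₁⟫ * ⟪x₁, y₁⟫ = k₁ ^ 2)
    (hg₂ : ⟪x₂, x₂⟫ * ⟪y₂, y₂⟫ - ⟪x₂, y₂⟫ * ⟪x₂, y₂⟫ = k₂ ^ 2)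
    (h : InnerProductGeometry.angle x₁ y₁ = InnerProductGeometry.angle x₂ y₂) :
    k₂ * ⟪x₁, y₁⟫ = k₁ * ⟪x₂, y₂⟫ := by
  have f₁ := InnerProductGeometry.sin_angle_mul_norm_mul_norm x₁ y₁
  have f₂ := InnerProductGeometry.sin_angle_mul_norm_mul_norm x₂ y₂
  rw [hg₁, Real.sqrt_sq hk₁.le] at f₁
  rw [hg₂, Real.sqrt_sq hk₂.le, ← h] at f₂
  have c₁ := InnerProductGeometry.cos_angle_mul_norm_mul_norm x₁ y₁
  have c₂ := InnerProductGeometry.cos_angle_mul_norm_mul_norm x₂ y₂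
  rw [← h] at c₂
  calc k₂ * ⟪x₁, y₁⟫
      = (Real.sin (InnerProductGeometry.angle x₁ y₁) * (‖x₂‖ * ‖y₂‖)) *
        (Real.cos (InnerProductGeometry.angle x₁ y₁) * (‖x₁‖ * ‖y₁‖)) := by rw [f₂, c₁]
    _ = (Real.sin (InnerProductGeometry.angle x₁ y₁) * (‖x₁‖ * ‖y₁‖)) *
        (Real.cos (InnerProductGeometry.angle x₁ y₁) * (‖x₂‖ * ‖y₂‖)) := by ring
    _ = k₁ * ⟪x₂, y₂⟫ := by rw [f₁, c₂]

private lemma strict_tri {X Y Z : EuclideanSpace ℝ (Fin 2)}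
    (h : ¬ Collinear ℝ ({X, Y, Z} : Set (EuclideanSpace ℝ (Fin 2)))) :
    dist X Z < dist X Y + dist Y Z := by
  rcases (dist_triangle X Y Z).lt_or_eq with h' | h'
  · exact h'
  · exact absurd (dist_add_dist_eq_iff.mp h'.symm).collinear h

set_option maxHeartbeats 1000000 in
private lemma brocard_coords (A B C P : EuclideanSpace ℝ (Fin 2)) (α β γ p q r : ℝ)
    (hp : p = dist B C ^ 2) (hq : q = dist C A ^ 2) (hr : r = dist A B ^ 2)
    (hΔp : 0 < 4 * (q * r) - (q + r - p) ^ 2)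
    (hΔq : 0 < 4 * (p * r) - (p + r - q) ^ 2)
    (hα : 0 < α) (hβ : 0 < β) (hγ : 0 < γ) (hsum : α + β + γ = 1)
    (hPc : P = α • A + β • B + γ • C)
    (h1 : ∠ P A B = ∠ P B C) (h2 : ∠ P B C = ∠ P C A) :
    α * (p * q + q * r + r * p) = p * r ∧ β * (p * q + q * r + r * p) = p * q ∧
      γ * (p * q + q * r + r * p) = q * r := by
  have hpn : 0 ≤ p := hp ▸ sq_nonneg _
  have hqn : 0 ≤ q := hq ▸ sq_nonneg _
  have hrn : 0 ≤ r := hr ▸ sq_nonneg _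
  have hp0 : 0 < p := by
    rcases hpn.eq_or_lt with h | h
    · exfalso; rw [← h] at hΔq; nlinarith only [hΔq, sq_nonneg (r - q)]
    · exact h
  have hr0 : 0 < r := by
    rcases hrn.eq_or_lt with h | h
    · exfalso; rw [← h] at hΔq; nlinarith only [hΔq, sq_nonneg (p - q)]
    · exact h
  have hq0 : 0 < q := by
    rcases hqn.eq_or_lt with h | h
    · exfalso; rw [← h] at hΔp; nlinarith only [hΔp, sq_nonneg (r - p)]
    · exact h
  set u := B - A with hu
  set v := C - A with hv
  have hiu : ⟪u, u⟫ = r := by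
    rw [real_inner_self_eq_norm_sq, hr, hu, ← dist_eq_norm, dist_comm]
  have hiv : ⟪v, v⟫ = q := by
    rw [real_inner_self_eq_norm_sq, hq, hv, ← dist_eq_norm, dist_comm]
  have hw : ⟪u, v⟫ = (q + r - p) / 2 := by
    have h1' : ‖u - v‖ ^ 2 = ‖u‖ ^ 2 - 2 * ⟪u, v⟫ + ‖v‖ ^ 2 := norm_sub_sq_real u v
    have h2' : ‖u - v‖ ^ 2 = p := by
      rw [hu, hv, show B - A - (C - A) = B - C by abel, ← dist_eq_norm, hp]
    have h3' : ‖u‖ ^ 2 = r := by rw [← real_inner_self_eq_norm_sq, hiu]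
    have h4' : ‖v‖ ^ 2 = q := by rw [← real_inner_self_eq_norm_sq, hiv]
    rw [h2', h3', h4'] at h1'
    linarith
  obtain rfl : β = 1 - α - γ := by linarith only [hsum]
  set SQ := Real.sqrt (q * r - ((q + r - p) / 2) ^ 2) with hSQ
  have hQpos : 0 < q * r - ((q + r - p) / 2) ^ 2 := by nlinarith only [hΔp]
  have hSQ2 : SQ ^ 2 = q * r - ((q + r - p) / 2) ^ 2 := Real.sq_sqrt hQpos.le
  have hSQ0 : 0 < SQ := Real.sqrt_pos.mpr hQpos
  have hPA : P - A = (1 - α - γ) • u + γ • v := by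
    rw [hPc, hu, hv]; module
  have hPB : P - B = ((1 - α - γ) - 1) • u + γ • v := by
    rw [hPc, hu, hv]; module
  have hPC : P - C = (1 - α - γ) • u + (γ - 1) • v := by
    rw [hPc, hu, hv]; module
  have hBA : B - A = (1 : ℝ) • u + (0 : ℝ) • v := by rw [hu, hv]; module
  have hCB : C - B = (-1 : ℝ) • u + (1 : ℝ) • v := by rw [hu, hv]; module
  have hAC : A - C = (0 : ℝ) • u + (-1 : ℝ) • v := by rw [hu, hv]; module
  have h1' : InnerProductGeometry.angle (P - A) (B - A) =
      InnerProductGeometry.angle (P - B) (C - B) := by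
    simpa only [EuclideanGeometry.angle, vsub_eq_sub] using h1
  have h2' : InnerProductGeometry.angle (P - B) (C - B) =
      InnerProductGeometry.angle (P - C) (A - C) := by
    simpa only [EuclideanGeometry.angle, vsub_eq_sub] using h2
  have g1 : ⟪P - A, P - A⟫ * ⟪B - A, B - A⟫ - ⟪P - A, B - A⟫ * ⟪P - A, B - A⟫
      = (γ * SQ) ^ 2 := by
    rw [hPA, hBA, gram_helper, hiu, hiv, hw, mul_pow, hSQ2]; ring
  have g2 : ⟪P - B, P - B⟫ * ⟪C - B, C - B⟫ - ⟪P - B, C - B⟫ * ⟪P - B, C - B⟫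
      = (α * SQ) ^ 2 := by
    rw [hPB, hCB, gram_helper, hiu, hiv, hw, mul_pow, hSQ2]; ring
  have g3 : ⟪P - C, P - C⟫ * ⟪A - C, A - C⟫ - ⟪P - C, A - C⟫ * ⟪P - C, A - C⟫
      = ((1 - α - γ) * SQ) ^ 2 := by
    rw [hPC, hAC, gram_helper, hiu, hiv, hw, mul_pow, hSQ2]; ring
  have E1raw := angle_aux (P - A) (B - A) (P - B) (C - B) (γ * SQ) (α * SQ)
    (by positivity) (by positivity) g1 g2 h1'
  have E2raw := angle_aux (P - B) (C - B) (P - C) (A - C) (α * SQ) ((1 - α - γ) * SQ)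
    (by positivity) (by positivity) g2 g3 h2'
  have i1 : ⟪P - A, B - A⟫ = (1 - α - γ) * r + γ * ((q + r - p) / 2) := by
    rw [hPA, hBA, inner_comb, hiu, hiv, hw]; ring
  have i2 : ⟪P - B, C - B⟫ = -((1 - α - γ) - 1) * r +
      (((1 - α - γ) - 1) - γ) * ((q + r - p) / 2) + γ * q := by
    rw [hPB, hCB, inner_comb, hiu, hiv, hw]; ring
  have i3 : ⟪P - C, A - C⟫ = -(1 - α - γ) * ((q + r - p) / 2) - (γ - 1) * q := by
    rw [hPC, hAC, inner_comb, hiu, hiv, hw]; ring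
  rw [i1, i2] at E1raw
  rw [i2, i3] at E2raw
  have hE1 : α * ((1 - α - γ) * r + γ * ((q + r - p) / 2)) =
      γ * (-((1 - α - γ) - 1) * r + (((1 - α - γ) - 1) - γ) * ((q + r - p) / 2) + γ * q) := by
    have h' : SQ * (α * ((1 - α - γ) * r + γ * ((q + r - p) / 2))) =
        SQ * (γ * (-((1 - α - γ) - 1) * r + (((1 - α - γ) - 1) - γ) * ((q + r - p) / 2)
          + γ * q)) := by linear_combination E1raw
    exact mul_left_cancel₀ hSQ0.ne' h'
  have hE2 : (1 - α - γ) * (-((1 - α - γ) - 1) * r + (((1 - α - γ) - 1) - γ) *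
      ((q + r - p) / 2) + γ * q) =
      α * (-(1 - α - γ) * ((q + r - p) / 2) - (γ - 1) * q) := by
    have h' : SQ * ((1 - α - γ) * (-((1 - α - γ) - 1) * r + (((1 - α - γ) - 1) - γ) *
        ((q + r - p) / 2) + γ * q)) =
        SQ * (α * (-(1 - α - γ) * ((q + r - p) / 2) - (γ - 1) * q)) := by
      linear_combination E2raw
    exact mul_left_cancel₀ hSQ0.ne' h'
  -- polynomial consequences
  have hE1' : α * (1 - α - γ) * r = γ ^ 2 * p + α * γ * (p - q) := by linear_combination hE1
  have hE2' : (1 - α - γ) * γ * p = α ^ 2 * q + α * (1 - α - γ) * (q - r) := by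
    linear_combination hE2
  have hcub : (γ ^ 2 * p + α * γ * (p - q)) * (γ * p - α * (q - r)) = α ^ 3 * (q * r) := by
    linear_combination (α * r) * hE2' - (γ * p - α * (q - r)) * hE1'
  have hFpos : 0 < r * α ^ 2 + (p + r - q) * (α * γ) + p * γ ^ 2 := by
    have hqq : 0 < (4 * (p * r) - (p + r - q) ^ 2) * γ ^ 2 := mul_pos hΔq (pow_pos hγ 2)
    have hsq : 0 ≤ (2 * r * α + (p + r - q) * γ) ^ 2 := sq_nonneg _
    have h4rF : 0 < 4 * r * (r * α ^ 2 + (p + r - q) * (α * γ) + p * γ ^ 2) := by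
      have hid : 4 * r * (r * α ^ 2 + (p + r - q) * (α * γ) + p * γ ^ 2) =
          (2 * r * α + (p + r - q) * γ) ^ 2 + (4 * (p * r) - (p + r - q) ^ 2) * γ ^ 2 := by
        ring
      linarith only [hid.ge, hid.le, hqq, hsq]
    by_contra hF
    push_neg at hF
    nlinarith only [h4rF, hr0, hF]
  have hzero : (p * γ - q * α) * (r * α ^ 2 + (p + r - q) * (α * γ) + p * γ ^ 2) = 0 := by
    linear_combination hcub
  have hkey1 : p * γ = q * α := by
    rcases mul_eq_zero.mp hzero with h' | h'
    · linarith only [h']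
    · exact absurd h' hFpos.ne'
  have h6 : (α * p) * ((1 - α - γ) * r) = (α * p) * (q * α) := by
    linear_combination p * hE1' + (p * γ + q * α + α * (p - q)) * hkey1
  have hkey2 : (1 - α - γ) * r = q * α := mul_left_cancel₀ (mul_pos hα hp0).ne' h6
  refine ⟨?_, ?_, ?_⟩
  · linear_combination (-p) * hkey2 - r * hkey1
  · linear_combination (q + p) * hkey2 - q * hkey1
  · linear_combination (q + r) * hkey1 - q * hkey2

set_option maxHeartbeats 1600000 in
private lemma brocard_inversion (A B C O P : EuclideanSpace ℝ (Fin 2)) (R p q r : ℝ)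
    (hABC : AffineIndependent ℝ ![A, B, C])
    (hOA : dist O A = R) (hOB : dist O B = R) (hOC : dist O C = R)
    (hp : p = dist B C ^ 2) (hq : q = dist C A ^ 2) (hr : r = dist A B ^ 2)
    (hne : ¬ (p = q ∧ q = r))
    (hP : P ∈ interior (convexHull ℝ ({A, B, C} : Set (EuclideanSpace ℝ (Fin 2)))))
    (h1 : ∠ P A B = ∠ P B C) (h2 : ∠ P B C = ∠ P C A)
    (hPO : P ≠ O) :
    inversion O R P = (p ^ 2 + q ^ 2 + r ^ 2 - p * q - q * r - r * p)⁻¹ •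
      ((p * (p - q)) • A + (q * (q - r)) • B + (r * (r - p)) • C) := by
  have hcol : ¬ Collinear ℝ ({A, B, C} : Set (EuclideanSpace ℝ (Fin 2))) :=
    affineIndependent_iff_not_collinear_set.mp hABC
  -- distinctness of vertices
  have hAB : A ≠ B := by
    rintro rfl
    exact hcol (by
      have e : ({A, A, C} : Set (EuclideanSpace ℝ (Fin 2))) = {A, C} := by
        ext x; simp
      rw [e]; exact collinear_pair ℝ A C)
  have hBC : B ≠ C := by
    rintro rfl
    exact hcol (by
      have e : ({A, B, B} : Set (EuclideanSpace ℝ (Fin 2))) = {A, B} := by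
        ext x; simp; try tauto
      rw [e]; exact collinear_pair ℝ A B)
  have hCA : C ≠ A := by
    rintro rfl
    exact hcol (by
      have e : ({C, B, C} : Set (EuclideanSpace ℝ (Fin 2))) = {C, B} := by
        ext x; simp; try tauto
      rw [e]; exact collinear_pair ℝ C B)
  -- strict triangle inequalities
  have t1 : dist B C < dist A B + dist C A := by
    have h' := strict_tri (X := B) (Y := A) (Z := C) (by
      intro hc; exact hcol (by
        have e : ({A, B, C} : Set (EuclideanSpace ℝ (Fin 2))) = {B, A, C} := by
          ext x; simp; try tauto
        rw [e]; exact hc))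
    rw [dist_comm B A, dist_comm A C] at h'
    exact h'
  have t2 : dist C A < dist B C + dist A B := by
    have h' := strict_tri (X := C) (Y := B) (Z := A) (by
      intro hc; exact hcol (by
        have e : ({A, B, C} : Set (EuclideanSpace ℝ (Fin 2))) = {C, B, A} := by
          ext x; simp; try tauto
        rw [e]; exact hc))
    rw [dist_comm C B, dist_comm B A] at h'
    exact h'
  have t3 : dist A B < dist C A + dist B C := by
    have h' := strict_tri (X := A) (Y := C) (Z := B) (by
      intro hc; exact hcol (by
        have e : ({A, B, C} : Set (EuclideanSpace ℝ (Fin 2))) = {A, C, B} := by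
          ext x; simp; try tauto
        rw [e]; exact hc))
    rw [dist_comm A C, dist_comm C B] at h'
    exact h'
  have hda : 0 < dist B C := dist_pos.mpr hBC
  have hdb : 0 < dist C A := dist_pos.mpr hCA
  have hdc : 0 < dist A B := dist_pos.mpr hAB
  have f1 : 0 < dist C A + dist A B - dist B C := by linarith only [t1]
  have f2 : 0 < dist B C + dist C A + dist A B := by linarith only [hda, hdb, hdc]
  have f3 : 0 < dist B C - dist C A + dist A B := by linarith only [t2]
  have f4 : 0 < dist B C + dist C A - dist A B := by linarith only [t3]
  have bigpos := mul_pos (mul_pos (mul_pos f1 f2) f3) f4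
  have hΔp : 0 < 4 * (q * r) - (q + r - p) ^ 2 := by
    rw [hp, hq, hr]; nlinarith only [bigpos]
  have hΔq : 0 < 4 * (p * r) - (p + r - q) ^ 2 := by
    rw [hp, hq, hr]; nlinarith only [bigpos]
  have hp0 : 0 < p := by rw [hp]; exact pow_pos hda 2
  have hq0 : 0 < q := by rw [hq]; exact pow_pos hdb 2
  have hr0 : 0 < r := by rw [hr]; exact pow_pos hdc 2
  have hs0 : 0 < p * q + q * r + r * p := by positivity
  have hD0 : 0 < p ^ 2 + q ^ 2 + r ^ 2 - p * q - q * r - r * p := by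
    have hne' : p ≠ q ∨ q ≠ r := by tauto
    rcases hne' with h | h
    · have h2' : 0 < (p - q) ^ 2 :=
        lt_of_le_of_ne (sq_nonneg _) (Ne.symm (pow_ne_zero 2 (sub_ne_zero.mpr h)))
      nlinarith only [h2', sq_nonneg (q - r), sq_nonneg (r - p)]
    · have h2' : 0 < (q - r) ^ 2 :=
        lt_of_le_of_ne (sq_nonneg _) (Ne.symm (pow_ne_zero 2 (sub_ne_zero.mpr h)))
      nlinarith only [h2', sq_nonneg (p - q), sq_nonneg (r - p)]
  -- affine basis
  have htop : affineSpan ℝ (Set.range ![A, B, C]) = ⊤ := by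
    rw [hABC.affineSpan_eq_top_iff_card_eq_finrank_add_one]
    simp [finrank_euclideanSpace_fin]
  let bas : AffineBasis (Fin 3) ℝ (EuclideanSpace ℝ (Fin 2)) := ⟨![A, B, C], hABC, htop⟩
  have hrange : Set.range (bas : Fin 3 → EuclideanSpace ℝ (Fin 2)) = {A, B, C} := by
    ext x
    constructor
    · rintro ⟨i, rfl⟩
      fin_cases i
      · exact Set.mem_insert _ _
      · exact Set.mem_insert_of_mem _ (Set.mem_insert _ _)
      · exact Set.mem_insert_of_mem _ (Set.mem_insert_of_mem _ rfl)
    · intro hx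
      simp only [Set.mem_insert_iff, Set.mem_singleton_iff] at hx
      rcases hx with rfl | rfl | rfl
      exacts [⟨0, rfl⟩, ⟨1, rfl⟩, ⟨2, rfl⟩]
  have hint := bas.interior_convexHull
  rw [hrange] at hint
  rw [hint] at hP
  -- coordinates of P
  have hPdec := bas.linear_combination_coord_eq_self P
  rw [Fin.sum_univ_three] at hPdec
  have hPsum := bas.sum_coord_apply_eq_one P
  rw [Fin.sum_univ_three] at hPsum
  set β := bas.coord 1 P with hβdef
  set γ := bas.coord 2 P with hγdef
  have hPc : P = bas.coord 0 P • A + β • B + γ • C := hPdec.symm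
  obtain ⟨k1, k2, k3⟩ := brocard_coords A B C P (bas.coord 0 P) β γ p q r hp hq hr hΔp hΔq
    (hP 0) (hP 1) (hP 2) hPsum hPc h1 h2
  have hβc : β = p * q / (p * q + q * r + r * p) := by
    rw [eq_div_iff hs0.ne']; exact k2
  have hγc : γ = q * r / (p * q + q * r + r * p) := by
    rw [eq_div_iff hs0.ne']; exact k3
  -- coordinates of O
  have hOdec := bas.linear_combination_coord_eq_self O
  rw [Fin.sum_univ_three] at hOdec
  have hOsum := bas.sum_coord_apply_eq_one O
  rw [Fin.sum_univ_three] at hOsum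
  set x := bas.coord 1 O with hxdef
  set y := bas.coord 2 O with hydef
  have hOc : O = bas.coord 0 O • A + x • B + y • C := hOdec.symm
  -- vectors
  set u := B - A with hu
  set v := C - A with hv
  have hiu : ⟪u, u⟫ = r := by
    rw [real_inner_self_eq_norm_sq, hr, hu, ← dist_eq_norm, dist_comm]
  have hiv : ⟪v, v⟫ = q := by
    rw [real_inner_self_eq_norm_sq, hq, hv, ← dist_eq_norm, dist_comm]
  have hw : ⟪u, v⟫ = (q + r - p) / 2 := by
    have h1' : ‖u - v‖ ^ 2 = ‖u‖ ^ 2 - 2 * ⟪u, v⟫ + ‖v‖ ^ 2 := norm_sub_sq_real u v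
    have h2' : ‖u - v‖ ^ 2 = p := by
      rw [hu, hv, show B - A - (C - A) = B - C by abel, ← dist_eq_norm, hp]
    have h3' : ‖u‖ ^ 2 = r := by rw [← real_inner_self_eq_norm_sq, hiu]
    have h4' : ‖v‖ ^ 2 = q := by rw [← real_inner_self_eq_norm_sq, hiv]
    rw [h2', h3', h4'] at h1'
    linarith only [h1']
  have hOA' : O - A = x • u + y • v := by
    rw [hOc, hu, hv, show bas.coord 0 O = 1 - x - y by linarith only [hOsum]]; module
  have hOB' : O - B = (x - 1) • u + y • v := by
    rw [hOc, hu, hv, show bas.coord 0 O = 1 - x - y by linarith only [hOsum]]; module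
  have hOC' : O - C = x • u + (y - 1) • v := by
    rw [hOc, hu, hv, show bas.coord 0 O = 1 - x - y by linarith only [hOsum]]; module
  have hPA' : P - A = β • u + γ • v := by
    rw [hPc, hu, hv, show bas.coord 0 P = 1 - β - γ by linarith only [hPsum]]; module
  have RA : x ^ 2 * r + x * y * (q + r - p) + y ^ 2 * q = R ^ 2 := by
    rw [← hOA, dist_eq_norm, ← real_inner_self_eq_norm_sq, hOA', inner_comb, hiu, hiv, hw]; ring
  have RB : (x - 1) ^ 2 * r + (x - 1) * y * (q + r - p) + y ^ 2 * q = R ^ 2 := by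
    rw [← hOB, dist_eq_norm, ← real_inner_self_eq_norm_sq, hOB', inner_comb, hiu, hiv, hw]; ring
  have RC : x ^ 2 * r + x * (y - 1) * (q + r - p) + (y - 1) ^ 2 * q = R ^ 2 := by
    rw [← hOC, dist_eq_norm, ← real_inner_self_eq_norm_sq, hOC', inner_comb, hiu, hiv, hw]; ring
  have L1 : 2 * x * r + y * (q + r - p) = r := by linear_combination RA - RB
  have L2 : x * (q + r - p) + 2 * y * q = q := by linear_combination RA - RC
  have hxm : x * (4 * (q * r) - (q + r - p) ^ 2) = q * (p + r - q) := by
    linear_combination 2 * q * L1 - (q + r - p) * L2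
  have hym : y * (4 * (q * r) - (q + r - p) ^ 2) = r * (p + q - r) := by
    linear_combination 2 * r * L2 - (q + r - p) * L1
  have hxc : x = q * (p + r - q) / (4 * (q * r) - (q + r - p) ^ 2) := by
    rw [eq_div_iff hΔp.ne']; exact hxm
  have hyc : y = r * (p + q - r) / (4 * (q * r) - (q + r - p) ^ 2) := by
    rw [eq_div_iff hΔp.ne']; exact hym
  have hPOeq : P - O = (β - x) • u + (γ - y) • v := by
    have e : P - O = (P - A) - (O - A) := by abel
    rw [e, hPA', hOA']; module
  set d2v := dist P O ^ 2 with hd2vdef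
  have hd2 : d2v = (β - x) ^ 2 * r + (β - x) * (γ - y) * (q + r - p)
      + (γ - y) ^ 2 * q := by
    rw [hd2vdef, dist_eq_norm, ← real_inner_self_eq_norm_sq, hPOeq, inner_comb, hiu, hiv, hw]
    ring
  have hd2ne : d2v ≠ 0 := by
    rw [hd2vdef]; exact pow_ne_zero 2 (dist_ne_zero.mpr hPO)
  have hSD : (p * q + q * r + r * p) * (4 * (q * r) - (q + r - p) ^ 2) ≠ 0 :=
    (mul_pos hs0 hΔp).ne'
  have hbx : (β - x) * ((p * q + q * r + r * p) * (4 * (q * r) - (q + r - p) ^ 2)) =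
      p * q * (4 * (q * r) - (q + r - p) ^ 2)
        - q * (p + r - q) * (p * q + q * r + r * p) := by
    linear_combination (4 * (q * r) - (q + r - p) ^ 2) * k2 - (p * q + q * r + r * p) * hxm
  have hgy : (γ - y) * ((p * q + q * r + r * p) * (4 * (q * r) - (q + r - p) ^ 2)) =
      q * r * (4 * (q * r) - (q + r - p) ^ 2)
        - r * (p + q - r) * (p * q + q * r + r * p) := by
    linear_combination (4 * (q * r) - (q + r - p) ^ 2) * k3 - (p * q + q * r + r * p) * hym
  have hR2sq : R ^ 2 * (4 * (q * r) - (q + r - p) ^ 2) ^ 2 =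
      (q * (p + r - q)) ^ 2 * r + (q * (p + r - q)) * (r * (p + q - r)) * (q + r - p)
        + (r * (p + q - r)) ^ 2 * q := by
    linear_combination (-(4 * (q * r) - (q + r - p) ^ 2) ^ 2) * RA
      + (r * (x * (4 * (q * r) - (q + r - p) ^ 2) + q * (p + r - q))
          + (q + r - p) * (y * (4 * (q * r) - (q + r - p) ^ 2))) * hxm
      + ((q + r - p) * (q * (p + r - q))
          + q * (y * (4 * (q * r) - (q + r - p) ^ 2) + r * (p + q - r))) * hym
  have hR2c : R ^ 2 * (4 * (q * r) - (q + r - p) ^ 2) = p * q * r := by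
    have h' : (R ^ 2 * (4 * (q * r) - (q + r - p) ^ 2)) * (4 * (q * r) - (q + r - p) ^ 2)
        = (p * q * r) * (4 * (q * r) - (q + r - p) ^ 2) := by
      linear_combination hR2sq
    exact mul_right_cancel₀ hΔp.ne' h'
  have hd2sq : d2v * ((p * q + q * r + r * p) * (4 * (q * r) - (q + r - p) ^ 2)) ^ 2 =
      (p * q * (4 * (q * r) - (q + r - p) ^ 2)
          - q * (p + r - q) * (p * q + q * r + r * p)) ^ 2 * r
        + (p * q * (4 * (q * r) - (q + r - p) ^ 2)
            - q * (p + r - q) * (p * q + q * r + r * p))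
          * (q * r * (4 * (q * r) - (q + r - p) ^ 2)
            - r * (p + q - r) * (p * q + q * r + r * p)) * (q + r - p)
        + (q * r * (4 * (q * r) - (q + r - p) ^ 2)
            - r * (p + q - r) * (p * q + q * r + r * p)) ^ 2 * q := by
    rw [hd2]
    linear_combination
      (r * ((β - x) * ((p * q + q * r + r * p) * (4 * (q * r) - (q + r - p) ^ 2))
          + (p * q * (4 * (q * r) - (q + r - p) ^ 2)
            - q * (p + r - q) * (p * q + q * r + r * p)))
        + (q + r - p) * ((γ - y) * ((p * q + q * r + r * p)
            * (4 * (q * r) - (q + r - p) ^ 2)))) * hbx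
      + ((q + r - p) * (p * q * (4 * (q * r) - (q + r - p) ^ 2)
            - q * (p + r - q) * (p * q + q * r + r * p))
        + q * ((γ - y) * ((p * q + q * r + r * p) * (4 * (q * r) - (q + r - p) ^ 2))
            + (q * r * (4 * (q * r) - (q + r - p) ^ 2)
              - r * (p + q - r) * (p * q + q * r + r * p)))) * hgy
  have hd2c : d2v * ((p * q + q * r + r * p) * (4 * (q * r) - (q + r - p) ^ 2)) =
      p * q * r * (p ^ 2 + q ^ 2 + r ^ 2 - p * q - q * r - r * p) := by
    have h' : (d2v * ((p * q + q * r + r * p) * (4 * (q * r) - (q + r - p) ^ 2)))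
          * ((p * q + q * r + r * p) * (4 * (q * r) - (q + r - p) ^ 2)) =
        (p * q * r * (p ^ 2 + q ^ 2 + r ^ 2 - p * q - q * r - r * p))
          * ((p * q + q * r + r * p) * (4 * (q * r) - (q + r - p) ^ 2)) := by
      linear_combination hd2sq
    exact mul_right_cancel₀ hSD h'
  have ht : R ^ 2 / d2v =
      (p * q + q * r + r * p) / (p ^ 2 + q ^ 2 + r ^ 2 - p * q - q * r - r * p) := by
    rw [div_eq_div_iff hd2ne hD0.ne']
    have h' : (R ^ 2 * (p ^ 2 + q ^ 2 + r ^ 2 - p * q - q * r - r * p))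
          * ((p * q + q * r + r * p) * (4 * (q * r) - (q + r - p) ^ 2)) =
        ((p * q + q * r + r * p) * d2v)
          * ((p * q + q * r + r * p) * (4 * (q * r) - (q + r - p) ^ 2)) := by
      linear_combination (p ^ 2 + q ^ 2 + r ^ 2 - p * q - q * r - r * p)
          * (p * q + q * r + r * p) * hR2c - (p * q + q * r + r * p) * hd2c
    exact mul_right_cancel₀ hSD h'
  have hinv : inversion O R P = (R ^ 2 / d2v) • (P - O) + O := by
    simp only [EuclideanGeometry.inversion_def]
    rw [div_pow, vsub_eq_sub, vadd_eq_add, ← hd2vdef]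
  have hOexp : O = x • u + y • v + A := sub_eq_iff_eq_add.mp hOA'
  have hB' : B = A + u := by rw [hu]; abel
  have hC' : C = A + v := by rw [hv]; abel
  rw [hinv, hPOeq, hOexp, hB', hC']
  rw [ht, hβc, hγc, hxc, hyc]
  have hΔne := hΔp.ne'
  have hDne := hD0.ne'
  have hSne := hs0.ne'
  generalize hΔg : 4 * (q * r) - (q + r - p) ^ 2 = Δ at hΔne ⊢
  generalize hDg : p ^ 2 + q ^ 2 + r ^ 2 - p * q - q * r - r * p = D at hDne ⊢
  generalize hSg : p * q + q * r + r * p = S at hSne ⊢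
  match_scalars
  all_goals field_simp
  all_goals rw [← hΔg, ← hDg, ← hSg]
  all_goals ring

private lemma sq_eq_of_nonneg {s t : ℝ} (hs : 0 ≤ s) (ht : 0 ≤ t) (h : s ^ 2 = t ^ 2) :
    s = t := by
  rw [← Real.sqrt_sq hs, h, Real.sqrt_sq ht]

theorem stmt17 (A B C O Ω₁ Ω₂ : EuclideanSpace ℝ (Fin 2)) (R a b c : ℝ)
    (hABC : AffineIndependent ℝ ![A, B, C])
    (hR : 0 < R) (hOA : dist O A = R) (hOB : dist O B = R) (hOC : dist O C = R)
    (ha : a = dist B C) (hb : b = dist C A) (hc : c = dist A B)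
    (hne : ¬ (a = b ∧ b = c))
    (hΩ₁ : Ω₁ ∈ interior (convexHull ℝ ({A, B, C} : Set (EuclideanSpace ℝ (Fin 2)))))
    (hΩ₁₁ : ∠ Ω₁ A B = ∠ Ω₁ B C) (hΩ₁₂ : ∠ Ω₁ B C = ∠ Ω₁ C A)
    (hΩ₂ : Ω₂ ∈ interior (convexHull ℝ ({A, B, C} : Set (EuclideanSpace ℝ (Fin 2)))))
    (hΩ₂₁ : ∠ Ω₂ A C = ∠ Ω₂ C B) (hΩ₂₂ : ∠ Ω₂ C B = ∠ Ω₂ B A)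
    (hΩ₁O : Ω₁ ≠ O) (hΩ₂O : Ω₂ ≠ O) :
    inversion O R Ω₁ =
      (a ^ 4 + b ^ 4 + c ^ 4 - a ^ 2 * b ^ 2 - b ^ 2 * c ^ 2 - c ^ 2 * a ^ 2)⁻¹ •
        ((a ^ 2 * (a ^ 2 - b ^ 2)) • A + (b ^ 2 * (b ^ 2 - c ^ 2)) • B +
          (c ^ 2 * (c ^ 2 - a ^ 2)) • C) ∧
    inversion O R Ω₂ =
      (a ^ 4 + b ^ 4 + c ^ 4 - a ^ 2 * b ^ 2 - b ^ 2 * c ^ 2 - c ^ 2 * a ^ 2)⁻¹ •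
        ((a ^ 2 * (a ^ 2 - c ^ 2)) • A + (b ^ 2 * (b ^ 2 - a ^ 2)) • B +
          (c ^ 2 * (c ^ 2 - b ^ 2)) • C) := by
  constructor
  · have hneq : ¬ (a ^ 2 = b ^ 2 ∧ b ^ 2 = c ^ 2) := by
      rintro ⟨e1, e2⟩
      exact hne ⟨sq_eq_of_nonneg (ha ▸ dist_nonneg) (hb ▸ dist_nonneg) e1,
        sq_eq_of_nonneg (hb ▸ dist_nonneg) (hc ▸ dist_nonneg) e2⟩
    have H := brocard_inversion A B C O Ω₁ R (a ^ 2) (b ^ 2) (c ^ 2) hABC hOA hOB hOC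
      (by rw [ha]) (by rw [hb]) (by rw [hc]) hneq hΩ₁ hΩ₁₁ hΩ₁₂ hΩ₁O
    rw [H, show (a ^ 2) ^ 2 + (b ^ 2) ^ 2 + (c ^ 2) ^ 2 - a ^ 2 * b ^ 2 - b ^ 2 * c ^ 2
      - c ^ 2 * a ^ 2 = a ^ 4 + b ^ 4 + c ^ 4 - a ^ 2 * b ^ 2 - b ^ 2 * c ^ 2 - c ^ 2 * a ^ 2
      from by ring]
  · have hneq : ¬ (a ^ 2 = c ^ 2 ∧ c ^ 2 = b ^ 2) := by
      rintro ⟨e1, e2⟩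
      have eac := sq_eq_of_nonneg (ha ▸ dist_nonneg) (hc ▸ dist_nonneg) e1
      have ecb := sq_eq_of_nonneg (hc ▸ dist_nonneg) (hb ▸ dist_nonneg) e2
      exact hne ⟨eac.trans ecb, ecb.symm⟩
    have hABC' : AffineIndependent ℝ ![A, C, B] := by
      rw [affineIndependent_iff_not_collinear_set] at hABC ⊢
      intro h; apply hABC
      have e : ({A, B, C} : Set (EuclideanSpace ℝ (Fin 2))) = {A, C, B} := by
        ext z; simp; tauto
      rwa [e]
    have hΩ₂' : Ω₂ ∈ interior (convexHull ℝ ({A, C, B} : Set (EuclideanSpace ℝ (Fin 2)))) := by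
      have e : ({A, C, B} : Set (EuclideanSpace ℝ (Fin 2))) = {A, B, C} := by
        ext z; simp; tauto
      rwa [e]
    have H := brocard_inversion A C B O Ω₂ R (a ^ 2) (c ^ 2) (b ^ 2) hABC' hOA hOC hOB
      (by rw [ha, dist_comm]) (by rw [hc, dist_comm]) (by rw [hb, dist_comm]) hneq hΩ₂'
      hΩ₂₁ hΩ₂₂ hΩ₂O
    rw [H, show (a ^ 2) ^ 2 + (c ^ 2) ^ 2 + (b ^ 2) ^ 2 - a ^ 2 * c ^ 2 - c ^ 2 * b ^ 2
      - b ^ 2 * a ^ 2 = a ^ 4 + b ^ 4 + c ^ 4 - a ^ 2 * b ^ 2 - b ^ 2 * c ^ 2 - c ^ 2 * a ^ 2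
      from by ring]
    module
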